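/- Let ℓ ≥ 4, n = ℓ + 2, and k = ℓ. Let Y ∈ ℝ^{(ℓ+2)×ℓ} have rows e₁, …, e_ℓ (the standard basis vectors of ℝ^ℓ), the zero vector 0, and (2/ℓ)·𝟙_ℓ; and let Z ∈ ℝ^{(ℓ+2)×ℓ} have rows e₁, …, e_ℓ, 0, 0. Then, for the complete-graph SNL cost g with ground truth Y: Z is second-order critical and g(Z) > 0 (so Z is a spurious second-order critical point). If moreover ℓ ≥ 5, then every Ż ∈ ℝ^{(ℓ+2)×ℓ} with ⟨ŻŻᵀ, (Δ*∘Δ)(ZZᵀ − YYᵀ)⟩ + (1/2)·‖Δ(ŻZᵀ + ZŻᵀ)‖_F² = 0 has the form Ż = 𝟙vᵀ + ZΩ for some v ∈ ℝ^ℓ and some skew-symmetric Ω ∈ ℝ^{ℓ×ℓ} (i.e., Z is a strict spurious second-order critical point). -/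

import Mathlib

open Matrix

namespace SNL

noncomputable def delta {n : ℕ} (X : Matrix (Fin n) (Fin n) ℝ) : Matrix (Fin n) (Fin n) ℝ :=
  Matrix.of fun i j => (X i i + X j j - 2 * X i j) / 2

noncomputable def deltaStar {n : ℕ} (H : Matrix (Fin n) (Fin n) ℝ) : Matrix (Fin n) (Fin n) ℝ :=
  Matrix.diagonal (fun i => ∑ k, H i k) - H

def frobInner {n m : ℕ} (X Y : Matrix (Fin n) (Fin m) ℝ) : ℝ := ∑ i, ∑ j, X i j * Y i j

def frobNormSq {n m : ℕ} (X : Matrix (Fin n) (Fin m) ℝ) : ℝ := frobInner X X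

noncomputable def snlCost {n ℓ k : ℕ} (Y : Matrix (Fin n) (Fin ℓ) ℝ)
    (Z : Matrix (Fin n) (Fin k) ℝ) : ℝ :=
  frobNormSq (delta (Z * Zᵀ - Y * Yᵀ))

def IsFirstOrderCritical {n ℓ k : ℕ} (Y : Matrix (Fin n) (Fin ℓ) ℝ)
    (Z : Matrix (Fin n) (Fin k) ℝ) : Prop :=
  deltaStar (delta (Z * Zᵀ - Y * Yᵀ)) * Z = 0

def IsSecondOrderCritical {n ℓ k : ℕ} (Y : Matrix (Fin n) (Fin ℓ) ℝ)
    (Z : Matrix (Fin n) (Fin k) ℝ) : Prop :=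
  IsFirstOrderCritical Y Z ∧
    ∀ W : Matrix (Fin n) (Fin k) ℝ,
      0 ≤ frobInner (W * Wᵀ) (deltaStar (delta (Z * Zᵀ - Y * Yᵀ)))
          + (1 / 2) * frobNormSq (delta (W * Zᵀ + Z * Wᵀ))

noncomputable def centering (n : ℕ) : Matrix (Fin n) (Fin n) ℝ :=
  1 - ((n : ℝ)⁻¹) • Matrix.of (fun _ _ => (1 : ℝ))

def diagM {n : ℕ} (X : Matrix (Fin n) (Fin n) ℝ) : Matrix (Fin n) (Fin n) ℝ :=
  Matrix.diagonal (fun i => X i i)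

noncomputable def Gamma {n : ℕ} (X : Matrix (Fin n) (Fin n) ℝ) : Matrix (Fin n) (Fin n) ℝ :=
  centering n * diagM X * centering n

noncomputable def Psi {n : ℕ} (X : Matrix (Fin n) (Fin n) ℝ) : Matrix (Fin n) (Fin n) ℝ :=
  ((n : ℝ) / 2) • (centering n * diagM X * centering n) +
    ((1 / 2) * Matrix.trace X) • centering n

noncomputable def lambdaMax {n : ℕ} (X : Matrix (Fin n) (Fin n) ℝ) : ℝ :=
  sSup {r : ℝ | ∃ v : Fin n → ℝ, (∑ i, v i ^ 2) = 1 ∧ r = v ⬝ᵥ (X *ᵥ v)}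

end SNL


namespace SNLAux
open SNL

def ee {ℓ : ℕ} (i : Fin ℓ) : Fin (ℓ+2) := ⟨i, by omega⟩
def P (ℓ : ℕ) : Fin (ℓ+2) := ⟨ℓ, by omega⟩
def M (ℓ : ℕ) : Fin (ℓ+2) := ⟨ℓ+1, by omega⟩

lemma ee_ne_M {ℓ : ℕ} (i : Fin ℓ) : ee i ≠ M ℓ := by
  simp [ee, M, Fin.ext_iff]; omega
lemma ee_ne_P {ℓ : ℕ} (i : Fin ℓ) : ee i ≠ P ℓ := by
  simp [ee, M, P, Fin.ext_iff]; omega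
lemma P_ne_M {ℓ : ℕ} : P ℓ ≠ M ℓ := by simp [P, M, Fin.ext_iff]
lemma P_ne_ee {ℓ : ℕ} (i : Fin ℓ) : P ℓ ≠ ee i := Ne.symm (ee_ne_P i)
lemma M_ne_ee {ℓ : ℕ} (i : Fin ℓ) : M ℓ ≠ ee i := Ne.symm (ee_ne_M i)
lemma M_ne_P {ℓ : ℕ} : M ℓ ≠ P ℓ := Ne.symm P_ne_M
lemma ee_val {ℓ : ℕ} (i : Fin ℓ) : ((ee i : Fin (ℓ+2)) : ℕ) = (i : ℕ) := rfl
lemma P_val {ℓ : ℕ} : ((P ℓ : Fin (ℓ+2)) : ℕ) = ℓ := rfl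
lemma M_val {ℓ : ℕ} : ((M ℓ : Fin (ℓ+2)) : ℕ) = ℓ+1 := rfl
lemma P_not_lt {ℓ : ℕ} : ¬ ((P ℓ : ℕ) < ℓ) := by simp [P]
lemma M_not_lt {ℓ : ℕ} : ¬ ((M ℓ : ℕ) < ℓ) := by simp [M]

lemma sum_split {ℓ : ℕ} (f : Fin (ℓ+2) → ℝ) :
    ∑ i, f i = (∑ i : Fin ℓ, f (ee i)) + f (P ℓ) + f (M ℓ) := by
  rw [Fin.sum_univ_castSucc, Fin.sum_univ_castSucc]; rfl

lemma sum_ite_val {n : ℕ} (c : ℕ) (hc : c < n) (f : Fin n → ℝ) :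
    ∑ k : Fin n, (if (k : ℕ) = c then f k else 0) = f ⟨c, hc⟩ := by
  have h : ∀ k : Fin n, ((k : ℕ) = c) = (k = ⟨c, hc⟩) := by
    intro k; simp [Fin.ext_iff]
  simp only [h]; simp

lemma fin_cases3 {ℓ : ℕ} (i : Fin (ℓ+2)) :
    (∃ i' : Fin ℓ, i = ee i') ∨ i = P ℓ ∨ i = M ℓ := by
  rcases Nat.lt_or_ge (i : ℕ) ℓ with hi | hi
  · exact Or.inl ⟨⟨i, hi⟩, Fin.ext rfl⟩
  · have := i.2
    rcases (by omega : (i:ℕ) = ℓ ∨ (i:ℕ) = ℓ+1) with h | h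
    · exact Or.inr (Or.inl (Fin.ext h))
    · exact Or.inr (Or.inr (Fin.ext h))

noncomputable def Z0 (ℓ : ℕ) : Matrix (Fin (ℓ+2)) (Fin ℓ) ℝ :=
  Matrix.of fun i j => if (i : ℕ) < ℓ then (if (j : ℕ) = (i : ℕ) then (1:ℝ) else 0) else 0

noncomputable def Y0 (ℓ : ℕ) : Matrix (Fin (ℓ+2)) (Fin ℓ) ℝ :=
  Matrix.of fun i j =>
    if (i : ℕ) < ℓ then (if (j : ℕ) = (i : ℕ) then (1:ℝ) else 0)
    else if (i : ℕ) = ℓ then 0 else 2 / (ℓ : ℝ)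

lemma Z0_ee {ℓ : ℕ} (i : Fin ℓ) (k : Fin ℓ) :
    Z0 ℓ (ee i) k = if (k : ℕ) = (i : ℕ) then 1 else 0 := by
  simp [Z0, ee, i.isLt]
lemma Z0_P {ℓ : ℕ} (k : Fin ℓ) : Z0 ℓ (P ℓ) k = 0 := by simp [Z0, P]
lemma Z0_M {ℓ : ℕ} (k : Fin ℓ) : Z0 ℓ (M ℓ) k = 0 := by
  have : ¬ ((M ℓ : ℕ) < ℓ) := by simp [M]
  simp [Z0, this]
lemma Y0_ee {ℓ : ℕ} (i : Fin ℓ) (k : Fin ℓ) :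
    Y0 ℓ (ee i) k = if (k : ℕ) = (i : ℕ) then 1 else 0 := by
  simp [Y0, ee, i.isLt]
lemma Y0_P {ℓ : ℕ} (k : Fin ℓ) : Y0 ℓ (P ℓ) k = 0 := by simp [Y0, P]
lemma Y0_M {ℓ : ℕ} (k : Fin ℓ) : Y0 ℓ (M ℓ) k = 2 / (ℓ:ℝ) := by
  have h1 : ¬ ((M ℓ : ℕ) < ℓ) := by simp [M]
  have h2 : ¬ ((M ℓ : ℕ) = ℓ) := by simp [M]
  simp [Y0, h1, h2]

noncomputable def G0 (ℓ : ℕ) : Matrix (Fin (ℓ+2)) (Fin (ℓ+2)) ℝ := fun i j =>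
  (if i = M ℓ ∧ j = M ℓ then -4/(ℓ:ℝ) else 0) +
  (if i = M ℓ ∧ (j:ℕ) < ℓ then -2/(ℓ:ℝ) else 0) +
  (if j = M ℓ ∧ (i:ℕ) < ℓ then -2/(ℓ:ℝ) else 0)

lemma gram_eq {ℓ : ℕ} (hℓ : 4 ≤ ℓ) : Z0 ℓ * (Z0 ℓ)ᵀ - Y0 ℓ * (Y0 ℓ)ᵀ = G0 ℓ := by
  have hℓ0 : (ℓ:ℝ) ≠ 0 := Nat.cast_ne_zero.mpr (by omega)
  ext i j
  simp only [Matrix.sub_apply, Matrix.mul_apply, Matrix.transpose_apply, G0]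
  rcases fin_cases3 i with ⟨i', rfl⟩ | rfl | rfl <;>
    rcases fin_cases3 j with ⟨j', rfl⟩ | rfl | rfl <;>
      simp only [Z0_ee, Z0_P, Z0_M, Y0_ee, Y0_P, Y0_M, ee_ne_M, ee_ne_P, P_ne_M,
        ee_val, P_val, M_val]
  · simp [sub_self]
  · simp [P_ne_M, ee_ne_M i', i'.isLt]
  · simp only [ee_ne_M i', false_and, and_false, if_neg, if_false, M_val]
    rw [Finset.sum_eq_zero (by intro k _; split <;> ring)]
    have : ∑ k : Fin ℓ, (if (k:ℕ) = (i':ℕ) then (1:ℝ) else 0) * (2/(ℓ:ℝ))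
        = ∑ k : Fin ℓ, (if (k:ℕ) = (i':ℕ) then 2/(ℓ:ℝ) else 0) := by
      apply Finset.sum_congr rfl; intro k _; split <;> ring
    rw [this, sum_ite_val (i':ℕ) i'.isLt]
    simp only [ee_ne_M i', i'.isLt, and_true, false_and, if_neg, if_false, and_self,
      if_pos, zero_sub]
    ring
  · simp [P_ne_M, ee_ne_M, ee_ne_P j']
  · simp [P_ne_M]
  · simp [P_ne_M, Ne.symm (P_ne_M (ℓ := ℓ))]
  · rw [Finset.sum_eq_zero (by intro k _; ring)]
    have : ∑ k : Fin ℓ, (2/(ℓ:ℝ)) * (if (k:ℕ) = (j':ℕ) then (1:ℝ) else 0)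
        = ∑ k : Fin ℓ, (if (k:ℕ) = (j':ℕ) then 2/(ℓ:ℝ) else 0) := by
      apply Finset.sum_congr rfl; intro k _; split <;> ring
    rw [this, sum_ite_val (j':ℕ) j'.isLt]
    simp only [Ne.symm (ee_ne_M j'), j'.isLt, and_true, false_and, if_neg, if_false,
      and_self, if_pos, zero_sub]
    ring_nf
    simp
  · simp [P_ne_M.symm, P_ne_M, Ne.symm (P_ne_M (ℓ := ℓ))]
  · rw [Finset.sum_eq_zero (by intro k _; ring)]
    rw [Finset.sum_const]
    simp only [Finset.card_univ, Fintype.card_fin, nsmul_eq_mul]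
    simp only [M_val, show ¬ (ℓ + 1 < ℓ) by omega, show ¬ (1 + ℓ < ℓ) by omega, and_true,
      and_false, and_self, if_true, if_false, true_and, ite_true, ite_false]
    field_simp
    ring

noncomputable def D0 (ℓ : ℕ) : Matrix (Fin (ℓ+2)) (Fin (ℓ+2)) ℝ := fun i j =>
  if (i = P ℓ ∧ j = M ℓ) ∨ (i = M ℓ ∧ j = P ℓ) then -2/(ℓ:ℝ) else 0

lemma delta_G0 {ℓ : ℕ} : delta (G0 ℓ) = D0 ℓ := by
  ext i j
  simp only [delta, Matrix.of_apply, G0, D0]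
  rcases fin_cases3 i with ⟨i', rfl⟩ | rfl | rfl <;>
    rcases fin_cases3 j with ⟨j', rfl⟩ | rfl | rfl <;>
      simp [ee_ne_M, ee_ne_P, P_ne_M, Ne.symm (P_ne_M (ℓ := ℓ)), ee_val, P_val, M_val,
        P_not_lt, M_not_lt, Fin.is_lt] <;> ring

noncomputable def uu (ℓ : ℕ) : Fin (ℓ+2) → ℝ := fun i =>
  if i = P ℓ then 1 else if i = M ℓ then -1 else 0

noncomputable def H0 (ℓ : ℕ) : Matrix (Fin (ℓ+2)) (Fin (ℓ+2)) ℝ := fun i j =>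
  (-2/(ℓ:ℝ)) * (uu ℓ i * uu ℓ j)

lemma deltaStar_D0 {ℓ : ℕ} : deltaStar (D0 ℓ) = H0 ℓ := by
  have hrow : ∀ i, ∑ k, D0 ℓ i k
      = (if i = P ℓ then -2/(ℓ:ℝ) else 0) + (if i = M ℓ then -2/(ℓ:ℝ) else 0) := by
    intro i
    have : ∀ k, D0 ℓ i k
        = (if k = M ℓ then (if i = P ℓ then -2/(ℓ:ℝ) else 0) else 0)
        + (if k = P ℓ then (if i = M ℓ then -2/(ℓ:ℝ) else 0) else 0) := by
      intro k
      simp only [D0]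
      by_cases h1 : i = P ℓ <;> by_cases h2 : i = M ℓ <;>
        by_cases h3 : k = P ℓ <;> by_cases h4 : k = M ℓ <;>
          simp_all [P_ne_M, Ne.symm (P_ne_M (ℓ := ℓ))]
    simp only [this, Finset.sum_add_distrib, Finset.sum_ite_eq', Finset.mem_univ, if_true]
  ext i j
  simp only [deltaStar, Matrix.sub_apply, Matrix.diagonal_apply, hrow, H0, uu, D0]
  by_cases h1 : i = P ℓ <;> by_cases h2 : i = M ℓ <;>
    by_cases h3 : j = P ℓ <;> by_cases h4 : j = M ℓ <;>
      by_cases h5 : i = j <;>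
        simp_all [P_ne_M, Ne.symm (P_ne_M (ℓ := ℓ))]

lemma uu_ee {ℓ : ℕ} (i : Fin ℓ) : uu ℓ (ee i) = 0 := by
  simp [uu, ee_ne_P, ee_ne_M]

lemma H0_mul_Z0 {ℓ : ℕ} : H0 ℓ * Z0 ℓ = 0 := by
  ext i j
  simp only [Matrix.mul_apply, H0, Matrix.zero_apply]
  apply Finset.sum_eq_zero
  intro k _
  rcases fin_cases3 k with ⟨k', rfl⟩ | rfl | rfl
  · simp [uu_ee]
  · simp [Z0_P]
  · simp [Z0_M]

lemma sum_mul_uu {ℓ : ℕ} (g : Fin (ℓ+2) → ℝ) :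
    ∑ i, g i * uu ℓ i = g (P ℓ) - g (M ℓ) := by
  rw [sum_split]
  rw [Finset.sum_eq_zero (fun i _ => by rw [uu_ee, mul_zero])]
  simp [uu, P_ne_M, Ne.symm (P_ne_M (ℓ := ℓ))]
  ring

lemma double_sum_factor {α : Type*} [Fintype α] (c : ℝ) (x y : α → ℝ) :
    ∑ i, ∑ j, c * (x i * y j) = c * ((∑ i, x i) * (∑ j, y j)) := by
  have h : ∀ i, ∑ j, c * (x i * y j) = (c * x i) * ∑ j, y j := by
    intro i; rw [Finset.mul_sum]; apply Finset.sum_congr rfl; intros; ring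
  simp only [h]
  rw [← Finset.sum_mul, ← Finset.mul_sum, mul_assoc]

lemma T1 {ℓ : ℕ} (W : Matrix (Fin (ℓ+2)) (Fin ℓ) ℝ) :
    frobInner (W * Wᵀ) (H0 ℓ)
      = (-2/(ℓ:ℝ)) * ∑ k, (W (P ℓ) k - W (M ℓ) k)^2 := by
  simp only [frobInner, Matrix.mul_apply, Matrix.transpose_apply, H0]
  have step1 : ∀ i j : Fin (ℓ+2), (∑ k, W i k * W j k) * ((-2/(ℓ:ℝ)) * (uu ℓ i * uu ℓ j))
      = ∑ k, (-2/(ℓ:ℝ)) * ((W i k * uu ℓ i) * (W j k * uu ℓ j)) := by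
    intro i j; rw [Finset.sum_mul]; apply Finset.sum_congr rfl; intros; ring
  simp only [step1]
  have step2 : ∀ i : Fin (ℓ+2),
      (∑ j, ∑ k, (-2/(ℓ:ℝ)) * ((W i k * uu ℓ i) * (W j k * uu ℓ j)))
      = ∑ k, ∑ j, (-2/(ℓ:ℝ)) * ((W i k * uu ℓ i) * (W j k * uu ℓ j)) := by
    intro i; exact Finset.sum_comm
  simp only [step2]
  rw [Finset.sum_comm]
  rw [Finset.mul_sum]
  apply Finset.sum_congr rfl
  intro k _
  have := double_sum_factor (-2/(ℓ:ℝ)) (fun i => W i k * uu ℓ i) (fun j => W j k * uu ℓ j)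
  rw [this, sum_mul_uu]
  ring

lemma WZt_ee {ℓ : ℕ} (W : Matrix (Fin (ℓ+2)) (Fin ℓ) ℝ) (i : Fin (ℓ+2)) (j : Fin ℓ) :
    (W * (Z0 ℓ)ᵀ) i (ee j) = W i j := by
  simp only [Matrix.mul_apply, Matrix.transpose_apply, Z0_ee]
  have : ∀ k : Fin ℓ, W i k * (if (k:ℕ) = (j:ℕ) then (1:ℝ) else 0)
      = if (k:ℕ) = (j:ℕ) then W i k else 0 := by
    intro k; split <;> ring
  rw [Finset.sum_congr rfl (fun k _ => this k), sum_ite_val (j:ℕ) j.isLt]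

lemma WZt_P {ℓ : ℕ} (W : Matrix (Fin (ℓ+2)) (Fin ℓ) ℝ) (i : Fin (ℓ+2)) :
    (W * (Z0 ℓ)ᵀ) i (P ℓ) = 0 := by
  simp [Matrix.mul_apply, Z0_P]

lemma WZt_M {ℓ : ℕ} (W : Matrix (Fin (ℓ+2)) (Fin ℓ) ℝ) (i : Fin (ℓ+2)) :
    (W * (Z0 ℓ)ᵀ) i (M ℓ) = 0 := by
  simp [Matrix.mul_apply, Z0_M]

lemma ZWt_ee {ℓ : ℕ} (W : Matrix (Fin (ℓ+2)) (Fin ℓ) ℝ) (i : Fin ℓ) (j : Fin (ℓ+2)) :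
    (Z0 ℓ * Wᵀ) (ee i) j = W j i := by
  simp only [Matrix.mul_apply, Matrix.transpose_apply, Z0_ee]
  have : ∀ k : Fin ℓ, (if (k:ℕ) = (i:ℕ) then (1:ℝ) else 0) * W j k
      = if (k:ℕ) = (i:ℕ) then W j k else 0 := by
    intro k; split <;> ring
  rw [Finset.sum_congr rfl (fun k _ => this k), sum_ite_val (i:ℕ) i.isLt]

lemma ZWt_P {ℓ : ℕ} (W : Matrix (Fin (ℓ+2)) (Fin ℓ) ℝ) (j : Fin (ℓ+2)) :
    (Z0 ℓ * Wᵀ) (P ℓ) j = 0 := by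
  simp [Matrix.mul_apply, Z0_P]

lemma ZWt_M {ℓ : ℕ} (W : Matrix (Fin (ℓ+2)) (Fin ℓ) ℝ) (j : Fin (ℓ+2)) :
    (Z0 ℓ * Wᵀ) (M ℓ) j = 0 := by
  simp [Matrix.mul_apply, Z0_M]

lemma X_ee_ee {ℓ : ℕ} (W : Matrix (Fin (ℓ+2)) (Fin ℓ) ℝ) (i j : Fin ℓ) :
    delta (W * (Z0 ℓ)ᵀ + Z0 ℓ * Wᵀ) (ee i) (ee j)
      = W (ee i) i + W (ee j) j - W (ee i) j - W (ee j) i := by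
  simp only [delta, Matrix.of_apply, Matrix.add_apply, WZt_ee, ZWt_ee]
  ring

lemma X_ee_P {ℓ : ℕ} (W : Matrix (Fin (ℓ+2)) (Fin ℓ) ℝ) (i : Fin ℓ) :
    delta (W * (Z0 ℓ)ᵀ + Z0 ℓ * Wᵀ) (ee i) (P ℓ)
      = W (ee i) i - W (P ℓ) i := by
  simp only [delta, Matrix.of_apply, Matrix.add_apply, WZt_ee, ZWt_ee, WZt_P, ZWt_P]
  ring

lemma X_ee_M {ℓ : ℕ} (W : Matrix (Fin (ℓ+2)) (Fin ℓ) ℝ) (i : Fin ℓ) :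
    delta (W * (Z0 ℓ)ᵀ + Z0 ℓ * Wᵀ) (ee i) (M ℓ)
      = W (ee i) i - W (M ℓ) i := by
  simp only [delta, Matrix.of_apply, Matrix.add_apply, WZt_ee, ZWt_ee, WZt_M, ZWt_M]
  ring

lemma X_P_ee {ℓ : ℕ} (W : Matrix (Fin (ℓ+2)) (Fin ℓ) ℝ) (j : Fin ℓ) :
    delta (W * (Z0 ℓ)ᵀ + Z0 ℓ * Wᵀ) (P ℓ) (ee j)
      = W (ee j) j - W (P ℓ) j := by
  simp only [delta, Matrix.of_apply, Matrix.add_apply, WZt_ee, ZWt_ee, WZt_P, ZWt_P]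
  ring

lemma X_M_ee {ℓ : ℕ} (W : Matrix (Fin (ℓ+2)) (Fin ℓ) ℝ) (j : Fin ℓ) :
    delta (W * (Z0 ℓ)ᵀ + Z0 ℓ * Wᵀ) (M ℓ) (ee j)
      = W (ee j) j - W (M ℓ) j := by
  simp only [delta, Matrix.of_apply, Matrix.add_apply, WZt_ee, ZWt_ee, WZt_M, ZWt_M]
  ring

lemma X_corner {ℓ : ℕ} (W : Matrix (Fin (ℓ+2)) (Fin ℓ) ℝ) (a b : Fin (ℓ+2))
    (ha : a = P ℓ ∨ a = M ℓ) (hb : b = P ℓ ∨ b = M ℓ) :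
    delta (W * (Z0 ℓ)ᵀ + Z0 ℓ * Wᵀ) a b = 0 := by
  rcases ha with rfl | rfl <;> rcases hb with rfl | rfl <;>
    simp [delta, Matrix.add_apply, WZt_P, ZWt_P, WZt_M, ZWt_M]

lemma T2split {ℓ : ℕ} (W : Matrix (Fin (ℓ+2)) (Fin ℓ) ℝ) :
    frobNormSq (delta (W * (Z0 ℓ)ᵀ + Z0 ℓ * Wᵀ))
      = (∑ i, ∑ j, (W (ee i) i + W (ee j) j - W (ee i) j - W (ee j) i)^2)
        + 2 * ∑ i, (W (ee i) i - W (P ℓ) i)^2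
        + 2 * ∑ i, (W (ee i) i - W (M ℓ) i)^2 := by
  set X := delta (W * (Z0 ℓ)ᵀ + Z0 ℓ * Wᵀ) with hX
  have inner : ∀ a, (∑ b, X a b * X a b)
      = (∑ j : Fin ℓ, X a (ee j) * X a (ee j))
        + X a (P ℓ) * X a (P ℓ) + X a (M ℓ) * X a (M ℓ) := fun a => sum_split _
  simp only [frobNormSq, frobInner]
  rw [sum_split]
  simp only [inner]
  simp only [hX, X_ee_ee, X_ee_P, X_ee_M, X_P_ee, X_M_ee,
    X_corner W _ _ (Or.inl rfl) (Or.inl rfl), X_corner W _ _ (Or.inl rfl) (Or.inr rfl),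
    X_corner W _ _ (Or.inr rfl) (Or.inl rfl), X_corner W _ _ (Or.inr rfl) (Or.inr rfl)]
  simp only [← pow_two, mul_zero, zero_mul, add_zero]
  simp only [Finset.sum_add_distrib]
  ring

lemma qeq {ℓ : ℕ} (W : Matrix (Fin (ℓ+2)) (Fin ℓ) ℝ) :
    frobInner (W * Wᵀ) (H0 ℓ)
        + (1/2) * frobNormSq (delta (W * (Z0 ℓ)ᵀ + Z0 ℓ * Wᵀ))
      = (1/2) * (∑ i, ∑ j, (W (ee i) i + W (ee j) j - W (ee i) j - W (ee j) i)^2)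
        + ∑ k, ((W (ee k) k - W (P ℓ) k)^2 + (W (ee k) k - W (M ℓ) k)^2
            - (2/(ℓ:ℝ)) * (W (P ℓ) k - W (M ℓ) k)^2) := by
  rw [T1, T2split]
  simp only [Finset.sum_add_distrib, Finset.sum_sub_distrib, ← Finset.mul_sum]
  ring

lemma frob_D0 {ℓ : ℕ} (hℓ : 4 ≤ ℓ) : frobNormSq (D0 ℓ) = 8/(ℓ:ℝ)^2 := by
  have hℓ0 : (ℓ:ℝ) ≠ 0 := Nat.cast_ne_zero.mpr (by omega)
  have inner : ∀ a, (∑ b, D0 ℓ a b * D0 ℓ a b)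
      = (∑ j : Fin ℓ, D0 ℓ a (ee j) * D0 ℓ a (ee j))
        + D0 ℓ a (P ℓ) * D0 ℓ a (P ℓ) + D0 ℓ a (M ℓ) * D0 ℓ a (M ℓ) := fun a => sum_split _
  simp only [frobNormSq, frobInner]
  rw [sum_split]
  simp only [inner]
  simp [D0, ee_ne_M, ee_ne_P, P_ne_M, P_ne_ee, M_ne_ee, M_ne_P]
  field_simp
  ring

end SNLAux

open SNL Matrix

open SNLAux in
theorem statement_15 {ℓ : ℕ} (hℓ : 4 ≤ ℓ)
    -- Y has rows e₁, …, e_ℓ, 0, (2/ℓ)·𝟙_ℓ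
    (Y : Matrix (Fin (ℓ + 2)) (Fin ℓ) ℝ)
    (hY : Y = Matrix.of fun (i : Fin (ℓ + 2)) (j : Fin ℓ) =>
      if (i : ℕ) < ℓ then (if (j : ℕ) = (i : ℕ) then (1 : ℝ) else 0)
      else if (i : ℕ) = ℓ then 0 else 2 / (ℓ : ℝ))
    -- Z has rows e₁, …, e_ℓ, 0, 0
    (Z : Matrix (Fin (ℓ + 2)) (Fin ℓ) ℝ)
    (hZ : Z = Matrix.of fun (i : Fin (ℓ + 2)) (j : Fin ℓ) =>
      if (i : ℕ) < ℓ then (if (j : ℕ) = (i : ℕ) then (1 : ℝ) else 0) else 0) :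
    (IsSecondOrderCritical Y Z ∧ 0 < snlCost Y Z) ∧
    (5 ≤ ℓ →
      ∀ W : Matrix (Fin (ℓ + 2)) (Fin ℓ) ℝ,
        frobInner (W * Wᵀ) (deltaStar (delta (Z * Zᵀ - Y * Yᵀ)))
          + (1 / 2) * frobNormSq (delta (W * Zᵀ + Z * Wᵀ)) = 0 →
        ∃ (v : Fin ℓ → ℝ) (Ω : Matrix (Fin ℓ) (Fin ℓ) ℝ),
          Ωᵀ = -Ω ∧ W = vecMulVec (fun _ => (1 : ℝ)) v + Z * Ω) := by
  have hY' : Y = Y0 ℓ := by rw [hY]; rfl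
  have hZ' : Z = Z0 ℓ := by rw [hZ]; rfl
  subst hY' hZ'
  have hlR : (4:ℝ) ≤ (ℓ:ℝ) := by exact_mod_cast hℓ
  have hgram : Z0 ℓ * (Z0 ℓ)ᵀ - Y0 ℓ * (Y0 ℓ)ᵀ = G0 ℓ := gram_eq hℓ
  have hH : deltaStar (delta (Z0 ℓ * (Z0 ℓ)ᵀ - Y0 ℓ * (Y0 ℓ)ᵀ)) = H0 ℓ := by
    rw [hgram, delta_G0, deltaStar_D0]
  have h25 : (2:ℝ)/(ℓ:ℝ) ≤ 1/2 := by
    rw [div_le_div_iff₀ (by linarith) (by norm_num)]; linarith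
  constructor
  · constructor
    · constructor
      · show deltaStar (delta (Z0 ℓ * (Z0 ℓ)ᵀ - Y0 ℓ * (Y0 ℓ)ᵀ)) * Z0 ℓ = 0
        rw [hH, H0_mul_Z0]
      · intro W
        rw [hH, qeq W]
        apply add_nonneg
        · positivity
        · apply Finset.sum_nonneg
          intro k _
          have hmul := mul_le_mul_of_nonneg_right h25
            (sq_nonneg (W (P ℓ) k - W (M ℓ) k))
          nlinarith [sq_nonneg (2 * W (ee k) k - W (P ℓ) k - W (M ℓ) k)]
    · show 0 < frobNormSq (delta (Z0 ℓ * (Z0 ℓ)ᵀ - Y0 ℓ * (Y0 ℓ)ᵀ))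
      rw [hgram, delta_G0, frob_D0 hℓ]
      have : (0:ℝ) < (ℓ:ℝ) := by linarith
      positivity
  · intro hℓ5 W hq
    rw [hH, qeq W] at hq
    have h25' : (2:ℝ)/(ℓ:ℝ) ≤ 2/5 := by
      have : (5:ℝ) ≤ (ℓ:ℝ) := by exact_mod_cast hℓ5
      rw [div_le_div_iff₀ (by linarith) (by norm_num)]; linarith
    have hrk : ∀ k : Fin ℓ, 0 ≤ (W (ee k) k - W (P ℓ) k)^2 + (W (ee k) k - W (M ℓ) k)^2
        - (2/(ℓ:ℝ)) * (W (P ℓ) k - W (M ℓ) k)^2 := by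
      intro k
      have hmul := mul_le_mul_of_nonneg_right h25
        (sq_nonneg (W (P ℓ) k - W (M ℓ) k))
      nlinarith [sq_nonneg (2 * W (ee k) k - W (P ℓ) k - W (M ℓ) k)]
    have hA : (0:ℝ) ≤ (1/2) * (∑ i, ∑ j,
        (W (ee i) i + W (ee j) j - W (ee i) j - W (ee j) i)^2) := by positivity
    have hB : (0:ℝ) ≤ ∑ k, ((W (ee k) k - W (P ℓ) k)^2 + (W (ee k) k - W (M ℓ) k)^2
        - (2/(ℓ:ℝ)) * (W (P ℓ) k - W (M ℓ) k)^2) :=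
      Finset.sum_nonneg (fun k _ => hrk k)
    have hsum0 : ∑ i, ∑ j,
        (W (ee i) i + W (ee j) j - W (ee i) j - W (ee j) i)^2 = 0 := by linarith
    have hB0 : ∑ k, ((W (ee k) k - W (P ℓ) k)^2 + (W (ee k) k - W (M ℓ) k)^2
        - (2/(ℓ:ℝ)) * (W (P ℓ) k - W (M ℓ) k)^2) = 0 := by linarith
    have hc : ∀ i j : Fin ℓ,
        W (ee i) i + W (ee j) j - W (ee i) j - W (ee j) i = 0 := by
      intro i j
      have h1 := (Finset.sum_eq_zero_iff_of_nonneg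
        (fun i _ => Finset.sum_nonneg (fun j _ => sq_nonneg _))).mp hsum0 i
        (Finset.mem_univ i)
      have h2 := (Finset.sum_eq_zero_iff_of_nonneg
        (fun j _ => sq_nonneg _)).mp h1 j (Finset.mem_univ j)
      exact pow_eq_zero_iff (by norm_num : (2:ℕ) ≠ 0) |>.mp h2
    have hr0 : ∀ k : Fin ℓ, (W (ee k) k - W (P ℓ) k)^2 + (W (ee k) k - W (M ℓ) k)^2
        - (2/(ℓ:ℝ)) * (W (P ℓ) k - W (M ℓ) k)^2 = 0 := fun k =>
      (Finset.sum_eq_zero_iff_of_nonneg (fun k _ => hrk k)).mp hB0 k (Finset.mem_univ k)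
    have hab : ∀ k : Fin ℓ,
        W (ee k) k - W (P ℓ) k = 0 ∧ W (ee k) k - W (M ℓ) k = 0 := by
      intro k
      have h := hr0 k
      have hmul := mul_le_mul_of_nonneg_right h25'
        (sq_nonneg (W (P ℓ) k - W (M ℓ) k))
      have hab2 : (W (ee k) k - W (P ℓ) k)^2 + (W (ee k) k - W (M ℓ) k)^2 ≤ 0 := by
        nlinarith [sq_nonneg ((W (ee k) k - W (P ℓ) k) + (W (ee k) k - W (M ℓ) k))]
      constructor
      · have h2 : (W (ee k) k - W (P ℓ) k)^2 = 0 :=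
          le_antisymm (by linarith [sq_nonneg (W (ee k) k - W (M ℓ) k)]) (sq_nonneg _)
        exact pow_eq_zero_iff (by norm_num : (2:ℕ) ≠ 0) |>.mp h2
      · have h2 : (W (ee k) k - W (M ℓ) k)^2 = 0 :=
          le_antisymm (by linarith [sq_nonneg (W (ee k) k - W (P ℓ) k)]) (sq_nonneg _)
        exact pow_eq_zero_iff (by norm_num : (2:ℕ) ≠ 0) |>.mp h2
    refine ⟨fun k => W (P ℓ) k,
      Matrix.of (fun i j => W (ee i) j - W (P ℓ) j), ?_, ?_⟩
    · ext i j
      simp only [Matrix.transpose_apply, Matrix.neg_apply, Matrix.of_apply]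
      have h1 := hc i j
      have h2 := (hab i).1
      have h3 := (hab j).1
      linarith
    · ext i j
      simp only [Matrix.add_apply, Matrix.vecMulVec_apply, one_mul]
      rcases fin_cases3 i with ⟨i', rfl⟩ | rfl | rfl
      · have hmul : (Z0 ℓ * Matrix.of (fun i j => W (ee i) j - W (P ℓ) j)) (ee i') j
            = W (ee i') j - W (P ℓ) j := by
          simp only [Matrix.mul_apply, Z0_ee, Matrix.of_apply]
          have h : ∀ k : Fin ℓ,
              (if (k:ℕ) = (i':ℕ) then (1:ℝ) else 0) * (W (ee k) j - W (P ℓ) j)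
              = if (k:ℕ) = (i':ℕ) then (W (ee k) j - W (P ℓ) j) else 0 := fun k => by
            split <;> ring
          rw [Finset.sum_congr rfl (fun k _ => h k), sum_ite_val (i':ℕ) i'.isLt]
        rw [hmul]; ring
      · have hmul : (Z0 ℓ * Matrix.of (fun i j => W (ee i) j - W (P ℓ) j)) (P ℓ) j
            = 0 := by
          simp [Matrix.mul_apply, Z0_P]
        rw [hmul]; ring
      · have hmul : (Z0 ℓ * Matrix.of (fun i j => W (ee i) j - W (P ℓ) j)) (M ℓ) j
            = 0 := by
          simp [Matrix.mul_apply, Z0_M]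
        rw [hmul]
        have h2 := (hab j).1
        have h3 := (hab j).2
        linarith
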